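/- For a simple oriented matroid M with tope set T and for every k with 1 ≤ k ≤ |T|/2, the number of tope committees of cardinality k satisfies κ*_k(M) = Σ over 1 ≤ j ≤ k with j ≡ k (mod 2) of C((|T| - 2j)/2, (k-j)/2)·κ°*_j(M), where κ°*_j(M) is the number of tope committees of cardinality j containing no pair of opposite topes. -/

import Mathlib

open scoped Classical

/-- Negation of a sign vector (tope), `+` ↔ `true`, `-` ↔ `false`. -/
def negT {E : Type*} (f : E → Bool) : E → Bool := fun e => !(f e)

/-- `K` is a tope committee for the (simple) oriented matroid with tope set `T`:
`K ⊆ T` and for every ground element `e`, strictly more than half of the members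
of `K` have sign `+` at `e`. -/
def IsCommittee {E : Type*} (T K : Finset (E → Bool)) : Prop :=
  K ⊆ T ∧ ∀ e : E, K.card < 2 * (K.filter (fun f => f e = true)).card

/-- `κ*_k`: the number of tope committees of cardinality `k`. -/
noncomputable def kappa {E : Type*} (T : Finset (E → Bool)) (k : ℕ) : ℕ :=
  (T.powerset.filter (fun K => K.card = k ∧ IsCommittee T K)).card

/-- `κ°*_k`: the number of tope committees of cardinality `k` containing no pair
of opposite topes. -/
noncomputable def kappaFree {E : Type*} (T : Finset (E → Bool)) (k : ℕ) : ℕ :=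
  (T.powerset.filter
    (fun K => K.card = k ∧ IsCommittee T K ∧ ∀ f ∈ K, negT f ∉ K)).card

section AuxStmt8
variable {E : Type*}

lemma negT_negT (f : E → Bool) : negT (negT f) = f := by funext e; simp [negT]

lemma negT_inj : Function.Injective (negT : (E → Bool) → (E → Bool)) :=
  Function.LeftInverse.injective negT_negT

lemma closed_half (P : Finset (E → Bool)) (hP : ∀ f ∈ P, negT f ∈ P) (e : E) :
    P.card = 2 * (P.filter (fun f => f e = true)).card := by
  have hsplit := Finset.card_filter_add_card_filter_not
    (s := P) (p := fun f => f e = true)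
  have hbij : (P.filter (fun f => f e = true)).card
      = (P.filter (fun f => ¬ f e = true)).card := by
    apply Finset.card_bij (fun f _ => negT f)
    · intro f hf
      simp only [Finset.mem_filter] at hf ⊢
      exact ⟨hP f hf.1, by simp [negT, hf.2]⟩
    · intro f _ g _ h
      exact negT_inj h
    · intro g hg
      simp only [Finset.mem_filter] at hg
      refine ⟨negT g, ?_, negT_negT g⟩
      simp only [Finset.mem_filter]
      refine ⟨hP g hg.1, ?_⟩
      simp only [negT]
      simp only [Bool.not_eq_true] at hg ⊢
      simp [hg.2]
  generalize (P.filter (fun f => f e = true)).card = a at *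
  generalize (P.filter (fun f => ¬ f e = true)).card = b at *
  omega

lemma comm_ineq (K₀ P : Finset (E → Bool)) (hd : Disjoint K₀ P)
    (hP : ∀ f ∈ P, negT f ∈ P) (e : E) :
    ((K₀ ∪ P).card < 2 * ((K₀ ∪ P).filter (fun f => f e = true)).card)
      ↔ (K₀.card < 2 * (K₀.filter (fun f => f e = true)).card) := by
  rw [Finset.filter_union, Finset.card_union_of_disjoint hd,
    Finset.card_union_of_disjoint (hd.mono (Finset.filter_subset _ _) (Finset.filter_subset _ _))]
  have := closed_half P hP e
  generalize (P.filter (fun f => f e = true)).card = a at *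
  generalize (K₀.filter (fun f => f e = true)).card = b at *
  omega

lemma comm_union (T K₀ P : Finset (E → Bool)) (hd : Disjoint K₀ P)
    (hP : ∀ f ∈ P, negT f ∈ P) (hPT : P ⊆ T) :
    IsCommittee T (K₀ ∪ P) ↔ IsCommittee T K₀ := by
  unfold IsCommittee
  constructor
  · rintro ⟨hsub, h⟩
    exact ⟨(Finset.subset_union_left).trans hsub,
      fun e => (comm_ineq K₀ P hd hP e).mp (h e)⟩
  · rintro ⟨hsub, h⟩
    exact ⟨Finset.union_subset hsub hPT,
      fun e => (comm_ineq K₀ P hd hP e).mpr (h e)⟩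

lemma closed_decomp (e₀ : E) (P : Finset (E → Bool)) (hP : ∀ f ∈ P, negT f ∈ P) :
    P = (P.filter (fun f => f e₀ = true))
        ∪ (P.filter (fun f => f e₀ = true)).image negT := by
  ext f
  simp only [Finset.mem_union, Finset.mem_filter, Finset.mem_image]
  constructor
  · intro hf
    by_cases h : f e₀ = true
    · exact Or.inl ⟨hf, h⟩
    · refine Or.inr ⟨negT f, ⟨hP f hf, ?_⟩, negT_negT f⟩
      simp only [negT]
      simp only [Bool.not_eq_true] at h
      simp [h]
  · rintro (⟨hf, _⟩ | ⟨g, ⟨hg, _⟩, rfl⟩)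
    · exact hf
    · exact hP g hg

lemma count_closed (e₀ : E) (R : Finset (E → Bool)) (hR : ∀ f ∈ R, negT f ∈ R) (s : ℕ) :
    (R.powerset.filter (fun P => P.card = 2 * s ∧ ∀ f ∈ P, negT f ∈ P)).card
      = ((R.filter (fun f => f e₀ = true)).card).choose s := by
  rw [← Finset.card_powersetCard]
  apply Finset.card_bij (fun P _ => P.filter (fun f => f e₀ = true))
  · intro P hP
    simp only [Finset.mem_filter, Finset.mem_powerset] at hP
    obtain ⟨hsub, hcard, hcl⟩ := hP
    rw [Finset.mem_powersetCard]
    constructor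
    · exact Finset.filter_subset_filter _ hsub
    · have := closed_half P hcl e₀
      generalize (P.filter (fun f => f e₀ = true)).card = a at *
      omega
  · intro P hP Q hQ h
    simp only [Finset.mem_filter, Finset.mem_powerset] at hP hQ
    rw [closed_decomp e₀ P hP.2.2, closed_decomp e₀ Q hQ.2.2, h]
  · intro S hS
    rw [Finset.mem_powersetCard] at hS
    obtain ⟨hsub, hcard⟩ := hS
    have hSpos : ∀ f ∈ S, f e₀ = true := fun f hf => (Finset.mem_filter.mp (hsub hf)).2
    have hSR : S ⊆ R := hsub.trans (Finset.filter_subset _ _)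
    have hdisj : Disjoint S (S.image negT) := by
      rw [Finset.disjoint_left]
      rintro f hf hf'
      obtain ⟨g, hg, rfl⟩ := Finset.mem_image.mp hf'
      have h1 := hSpos _ hf
      have h2 := hSpos _ hg
      simp [negT, h2] at h1
    refine ⟨S ∪ S.image negT, ?_, ?_⟩
    · simp only [Finset.mem_filter, Finset.mem_powerset]
      refine ⟨?_, ?_, ?_⟩
      · apply Finset.union_subset hSR
        intro f hf
        obtain ⟨g, hg, rfl⟩ := Finset.mem_image.mp hf
        exact hR g (hSR hg)
      · rw [Finset.card_union_of_disjoint hdisj, Finset.card_image_of_injective _ negT_inj,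
          hcard]
        omega
      · intro f hf
        rcases Finset.mem_union.mp hf with h | h
        · exact Finset.mem_union_right _ (Finset.mem_image_of_mem _ h)
        · obtain ⟨g, hg, rfl⟩ := Finset.mem_image.mp h
          rw [negT_negT]
          exact Finset.mem_union_left _ hg
    · rw [Finset.filter_union]
      have h1 : S.filter (fun f => f e₀ = true) = S :=
        Finset.filter_true_of_mem hSpos
      have h2 : (S.image negT).filter (fun f => f e₀ = true) = ∅ := by
        rw [Finset.filter_eq_empty_iff]
        rintro f hf
        obtain ⟨g, hg, rfl⟩ := Finset.mem_image.mp hf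
        simp [negT, hSpos _ hg]
      rw [h1, h2, Finset.union_empty]

noncomputable def core {E : Type*} (K : Finset (E → Bool)) : Finset (E → Bool) :=
  K.filter (fun f => negT f ∉ K)

noncomputable def prt {E : Type*} (K : Finset (E → Bool)) : Finset (E → Bool) :=
  K.filter (fun f => negT f ∈ K)

lemma core_subset (K : Finset (E → Bool)) : core K ⊆ K := Finset.filter_subset _ _

lemma core_union_prt (K : Finset (E → Bool)) : core K ∪ prt K = K := by
  rw [core, prt, Finset.union_comm]
  exact Finset.filter_union_filter_not_eq _ K

lemma disjoint_core_prt (K : Finset (E → Bool)) : Disjoint (core K) (prt K) := by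
  rw [core, prt]
  exact (Finset.disjoint_filter_filter_not K K _).symm

lemma prt_closed (K : Finset (E → Bool)) : ∀ f ∈ prt K, negT f ∈ prt K := by
  intro f hf
  rw [prt, Finset.mem_filter] at hf ⊢
  exact ⟨hf.2, by rw [negT_negT]; exact hf.1⟩

lemma core_free (K : Finset (E → Bool)) : ∀ f ∈ core K, negT f ∉ core K := by
  intro f hf hnf
  rw [core, Finset.mem_filter] at hf hnf
  exact hf.2 hnf.1

lemma comm_core (T K : Finset (E → Bool)) (hKT : K ⊆ T) :
    IsCommittee T K ↔ IsCommittee T (core K) := by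
  conv_lhs => rw [← core_union_prt K]
  exact comm_union T (core K) (prt K) (disjoint_core_prt K) (prt_closed K)
    ((Finset.filter_subset _ _).trans hKT)

lemma core_card_mod [Nonempty E] (K : Finset (E → Bool)) : K.card % 2 = (core K).card % 2 := by
  have h1 : (core K).card + (prt K).card = K.card := by
    rw [← Finset.card_union_of_disjoint (disjoint_core_prt K), core_union_prt]
  have h2 := closed_half (prt K) (prt_closed K) (Classical.choice ‹Nonempty E›)
  generalize (((prt K).filter (fun f => f (Classical.choice ‹Nonempty E›) = true))).card = a at *
  omega

lemma fiber_card [Nonempty E] (T : Finset (E → Bool)) (hneg : ∀ f ∈ T, negT f ∈ T)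
    (k j : ℕ) (hjk : j ≤ k) (hpar : j % 2 = k % 2) (K₀ : Finset (E → Bool))
    (hK₀T : K₀ ⊆ T) (hK₀c : K₀.card = j) (hK₀comm : IsCommittee T K₀)
    (hK₀free : ∀ f ∈ K₀, negT f ∉ K₀) :
    ((T.powerset.filter (fun K => K.card = k ∧ IsCommittee T K)).filter
        (fun K => core K = K₀)).card
      = ((T.card - 2 * j) / 2).choose ((k - j) / 2) := by
  classical
  obtain ⟨e₀⟩ := ‹Nonempty E›
  set R : Finset (E → Bool) := T \ (K₀ ∪ K₀.image negT) with hR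
  have himg : K₀.image negT ⊆ T := by
    intro f hf
    obtain ⟨g, hg, rfl⟩ := Finset.mem_image.mp hf
    exact hneg g (hK₀T hg)
  have hdisj0 : Disjoint K₀ (K₀.image negT) := by
    rw [Finset.disjoint_left]
    rintro f hf hf'
    obtain ⟨g, hg, rfl⟩ := Finset.mem_image.mp hf'
    exact hK₀free g hg hf
  have hsub2 : K₀ ∪ K₀.image negT ⊆ T := Finset.union_subset hK₀T himg
  have hcard2 : (K₀ ∪ K₀.image negT).card = 2 * j := by
    rw [Finset.card_union_of_disjoint hdisj0,
      Finset.card_image_of_injective _ negT_inj, hK₀c]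
    omega
  have hRcard : R.card = T.card - 2 * j := by
    rw [hR, Finset.card_sdiff_of_subset hsub2, hcard2]
  have hT2j : 2 * j ≤ T.card := hcard2 ▸ Finset.card_le_card hsub2
  have hRclosed : ∀ f ∈ R, negT f ∈ R := by
    intro f hf
    rw [hR, Finset.mem_sdiff] at hf ⊢
    refine ⟨hneg f hf.1, ?_⟩
    intro hmem
    apply hf.2
    rcases Finset.mem_union.mp hmem with h | h
    · exact Finset.mem_union_right _
        (by rw [← negT_negT f]; exact Finset.mem_image_of_mem _ h)
    · obtain ⟨g, hg, hgf⟩ := Finset.mem_image.mp h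
      have : g = f := negT_inj hgf
      exact Finset.mem_union_left _ (this ▸ hg)
  have hRpos : (R.filter (fun f => f e₀ = true)).card = (T.card - 2 * j) / 2 := by
    have := closed_half R hRclosed e₀
    generalize (R.filter (fun f => f e₀ = true)).card = a at *
    omega
  rw [← hRpos, ← count_closed e₀ R hRclosed ((k - j) / 2)]
  apply Finset.card_bij (fun K _ => K \ K₀)
  · intro K hK
    simp only [Finset.mem_filter, Finset.mem_powerset] at hK
    obtain ⟨⟨hKT, hKc, hKcomm⟩, hcore⟩ := hK
    have hK₀K : K₀ ⊆ K := hcore ▸ core_subset K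
    have hPprt : K \ K₀ = prt K := by
      rw [← hcore]
      ext f
      simp only [Finset.mem_sdiff, core, prt, Finset.mem_filter, not_and, not_not]
      tauto
    simp only [Finset.mem_filter, Finset.mem_powerset]
    refine ⟨?_, ?_, ?_⟩
    · intro f hf
      have hfprt : f ∈ prt K := hPprt ▸ hf
      rw [prt, Finset.mem_filter] at hfprt
      rw [hR, Finset.mem_sdiff]
      refine ⟨hKT hfprt.1, ?_⟩
      intro hmem
      rcases Finset.mem_union.mp hmem with h | h
      · exact Finset.disjoint_left.mp (disjoint_core_prt K)
          (hcore ▸ h : f ∈ core K)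
          (by rw [prt, Finset.mem_filter]; exact hfprt)
      · obtain ⟨g, hg, rfl⟩ := Finset.mem_image.mp h
        have hgcore : g ∈ core K := hcore ▸ hg
        rw [core, Finset.mem_filter] at hgcore
        exact hgcore.2 hfprt.1
    · rw [Finset.card_sdiff_of_subset hK₀K, hKc, hK₀c]
      clear * - hjk hpar
      omega
    · intro f hf
      rw [hPprt] at hf ⊢
      exact prt_closed K f hf
  · intro K hK K' hK' h
    simp only [Finset.mem_filter, Finset.mem_powerset] at hK hK'
    have h1 : K₀ ⊆ K := hK.2 ▸ core_subset K
    have h2 : K₀ ⊆ K' := hK'.2 ▸ core_subset K'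
    rw [← Finset.union_sdiff_of_subset h1, ← Finset.union_sdiff_of_subset h2, h]
  · intro P hP
    simp only [Finset.mem_filter, Finset.mem_powerset] at hP
    obtain ⟨hPR, hPc, hPcl⟩ := hP
    have hPT : P ⊆ T := hPR.trans Finset.sdiff_subset
    have hdisj : Disjoint K₀ P := by
      rw [Finset.disjoint_left]
      intro f hf hf'
      have hfR := hPR hf'
      rw [hR, Finset.mem_sdiff] at hfR
      exact hfR.2 (Finset.mem_union_left _ hf)
    have hcorek : core (K₀ ∪ P) = K₀ := by
      ext f
      rw [core, Finset.mem_filter, Finset.mem_union]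
      constructor
      · rintro ⟨hf | hf, hnf⟩
        · exact hf
        · exact absurd (Finset.mem_union_right _ (hPcl f hf)) hnf
      · intro hf
        refine ⟨Or.inl hf, ?_⟩
        intro hnf
        rcases Finset.mem_union.mp hnf with h | h
        · exact hK₀free f hf h
        · have hfR := hPR h
          rw [hR, Finset.mem_sdiff] at hfR
          exact hfR.2 (Finset.mem_union_right _ (Finset.mem_image_of_mem _ hf))
    refine ⟨K₀ ∪ P, ?_, Finset.union_sdiff_cancel_left hdisj⟩
    simp only [Finset.mem_filter, Finset.mem_powerset]
    refine ⟨⟨Finset.union_subset hK₀T hPT, ?_, ?_⟩, hcorek⟩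
    · rw [Finset.card_union_of_disjoint hdisj, hK₀c, hPc]
      clear * - hjk hpar
      omega
    · exact (comm_union T K₀ P hdisj hPcl hPT).mpr hK₀comm

end AuxStmt8

set_option maxHeartbeats 1000000 in
theorem stmt8 {E : Type*} [Fintype E] [Nonempty E] (T : Finset (E → Bool))
    (hneg : ∀ f ∈ T, negT f ∈ T) (k : ℕ) (hk1 : 1 ≤ k) (hk2 : 2 * k ≤ T.card) :
    kappa T k
      = ∑ j ∈ Finset.range (k + 1),
          if 1 ≤ j ∧ j % 2 = k % 2 then
            ((T.card - 2 * j) / 2).choose ((k - j) / 2) * kappaFree T j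
          else 0 := by
  classical
  unfold kappa
  rw [Finset.card_eq_sum_card_fiberwise
    (f := fun K => (core K).card) (t := Finset.range (k + 1))
    (fun K hK => by
      simp only [Finset.mem_coe, Finset.mem_filter, Finset.mem_powerset] at hK
      rw [Finset.mem_coe, Finset.mem_range]
      show (core K).card < k + 1
      have h1 := Finset.card_le_card (core_subset K)
      have h2 : K.card = k := hK.2.1
      clear * - h1 h2
      omega)]
  apply Finset.sum_congr rfl
  intro j hj
  rw [Finset.mem_range] at hj
  by_cases hcond : 1 ≤ j ∧ j % 2 = k % 2
  · rw [if_pos hcond]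
    have hmemF : ∀ K ∈ (T.powerset.filter (fun K => K.card = k ∧ IsCommittee T K)).filter
        (fun K => (core K).card = j),
        core K ∈ T.powerset.filter
          (fun K₀ => K₀.card = j ∧ IsCommittee T K₀ ∧ ∀ f ∈ K₀, negT f ∉ K₀) := by
      intro K hK
      simp only [Finset.mem_filter, Finset.mem_powerset] at hK ⊢
      obtain ⟨⟨hKT, hKc, hKcomm⟩, hcc⟩ := hK
      exact ⟨(core_subset K).trans hKT, hcc, (comm_core T K hKT).mp hKcomm, core_free K⟩
    rw [Finset.card_eq_sum_card_fiberwise hmemF]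
    have hfib : ∀ K₀ ∈ T.powerset.filter
        (fun K₀ => K₀.card = j ∧ IsCommittee T K₀ ∧ ∀ f ∈ K₀, negT f ∉ K₀),
        (((T.powerset.filter (fun K => K.card = k ∧ IsCommittee T K)).filter
            (fun K => (core K).card = j)).filter (fun K => core K = K₀)).card
          = ((T.card - 2 * j) / 2).choose ((k - j) / 2) := by
      intro K₀ hK₀
      simp only [Finset.mem_filter, Finset.mem_powerset] at hK₀
      obtain ⟨h1, h2, h3, h4⟩ := hK₀
      rw [← fiber_card T hneg k j (by omega) hcond.2 K₀ h1 h2 h3 h4]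
      congr 1
      ext K
      simp only [Finset.mem_filter]
      constructor
      · rintro ⟨⟨h, _⟩, hc⟩
        exact ⟨h, hc⟩
      · rintro ⟨h, hc⟩
        exact ⟨⟨h, by rw [hc, h2]⟩, hc⟩
    rw [Finset.sum_congr rfl hfib, Finset.sum_const, smul_eq_mul, mul_comm, kappaFree]
    congr 2
    ext K
    simp only [Finset.mem_filter]
  · rw [if_neg hcond]
    rw [Finset.card_eq_zero, Finset.filter_eq_empty_iff]
    intro K hK
    simp only [Finset.mem_filter, Finset.mem_powerset] at hK
    obtain ⟨hKT, hKc, hKcomm⟩ := hK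
    intro hcc
    apply hcond
    have hcoremod := core_card_mod K
    have hcomm' := (comm_core T K hKT).mp hKcomm
    constructor
    · by_contra h
      have hc0 : (core K).card = 0 := by rw [hcc]; omega
      have hempty : core K = ∅ := Finset.card_eq_zero.mp hc0
      obtain ⟨e⟩ := ‹Nonempty E›
      have hcon := hcomm'.2 e
      rw [hempty] at hcon
      simp at hcon
    · rw [← hcc, ← hcoremod, hKc]
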